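/- For every nonnegative integer n, ∑_{k=0}^{n} k³·H_k·H_{n-k} = (n²(n+1)²/4)·[H_{n+1}² − H_{n+1}^{(2)}] − (1/12)·n²(n+1)(7n+5)·H_{n+1} + (1/72)·n²(n+1)(35n+37). -/

import Mathlib

open Finset

/-- The harmonic number `H n = ∑_{k=1}^n 1/k`. -/
def H (n : ℕ) : ℚ := ∑ k ∈ Finset.range n, (1 : ℚ) / ((k : ℚ) + 1)

/-- The generalized harmonic number `H n ^ (m) = ∑_{k=1}^n 1/k^m`. -/
def Hgen (m n : ℕ) : ℚ := ∑ k ∈ Finset.range n, (1 : ℚ) / ((k : ℚ) + 1) ^ m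

lemma H_succ (n : ℕ) : H (n + 1) = H n + 1 / ((n : ℚ) + 1) := by
  simp [H, Finset.sum_range_succ]

lemma Hgen_succ (n : ℕ) : Hgen 2 (n + 1) = Hgen 2 n + 1 / ((n : ℚ) + 1) ^ 2 := by
  simp [Hgen, Finset.sum_range_succ]

lemma C0 (n : ℕ) : ∑ k ∈ Finset.range (n + 1), H k = ((n : ℚ) + 1) * H (n + 1) - ((n : ℚ) + 1) := by
  induction n with
  | zero => simp [H]
  | succ n ih =>
    rw [Finset.sum_range_succ, ih, H_succ (n + 1)]
    have h1 : ((n : ℚ) + 1 + 1) ≠ 0 := by positivity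
    push_cast
    field_simp
    ring

lemma C1 (n : ℕ) : ∑ k ∈ Finset.range (n + 1), (k : ℚ) * H k =
    ((n : ℚ) ^ 2 / 2 + (n : ℚ) / 2) * H (n + 1) - ((n : ℚ) ^ 2 / 4 + (n : ℚ) / 4) := by
  induction n with
  | zero => simp [H]
  | succ n ih =>
    rw [Finset.sum_range_succ, ih, H_succ (n + 1)]
    have h1 : ((n : ℚ) + 1 + 1) ≠ 0 := by positivity
    push_cast
    field_simp
    ring

lemma C2 (n : ℕ) : ∑ k ∈ Finset.range (n + 1), (k : ℚ) ^ 2 * H k =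
    ((n : ℚ) ^ 3 / 3 + (n : ℚ) ^ 2 / 2 + (n : ℚ) / 6) * H (n + 1)
      - ((n : ℚ) ^ 3 / 9 + (n : ℚ) ^ 2 / 4 + 5 * (n : ℚ) / 36) := by
  induction n with
  | zero => simp [H]
  | succ n ih =>
    rw [Finset.sum_range_succ, ih, H_succ (n + 1)]
    have h1 : ((n : ℚ) + 1 + 1) ≠ 0 := by positivity
    push_cast
    field_simp
    ring

lemma reflectH (n : ℕ) :
    ∑ k ∈ Finset.range (n + 1), (1 : ℚ) / ((n : ℚ) + 1 - k) = H (n + 1) := by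
  rw [H, ← Finset.sum_range_reflect (fun k => (1 : ℚ) / ((k : ℚ) + 1)) (n + 1)]
  refine Finset.sum_congr rfl fun k hk => ?_
  rw [Finset.mem_range] at hk
  have hk' : k ≤ n := Nat.lt_succ_iff.mp hk
  have : ((n + 1 - 1 - k : ℕ) : ℚ) = (n : ℚ) - k := by
    simp only [Nat.add_sub_cancel]
    push_cast [Nat.cast_sub hk']
    ring
  rw [this]
  ring_nf

lemma B0 (n : ℕ) : ∑ k ∈ Finset.range (n + 1), H k / ((n : ℚ) + 1 - k) =
    (H (n + 1)) ^ 2 - Hgen 2 (n + 1) := by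
  induction n with
  | zero => norm_num [H, Hgen]
  | succ n ih =>
    rw [Finset.sum_range_succ']
    push_cast
    have step : ∀ k ∈ Finset.range (n + 1),
        H (k + 1) / ((n : ℚ) + 1 + 1 - ((k : ℚ) + 1)) =
          H k / ((n : ℚ) + 1 - k)
            + (1 / ((n : ℚ) + 2)) * (1 / ((k : ℚ) + 1) + 1 / ((n : ℚ) + 1 - k)) := by
      intro k hk
      rw [Finset.mem_range] at hk
      have hk' : (k : ℚ) ≤ n := by exact_mod_cast Nat.lt_succ_iff.mp hk
      have h1 : ((n : ℚ) + 1 - k) ≠ 0 := by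
        have : (0 : ℚ) < (n : ℚ) + 1 - k := by linarith
        linarith
      have h2 : ((k : ℚ) + 1) ≠ 0 := by positivity
      have h3 : ((n : ℚ) + 2) ≠ 0 := by positivity
      rw [H_succ]
      rw [show ((n : ℚ) + 1 + 1 - ((k : ℚ) + 1)) = (n : ℚ) + 1 - k by ring]
      field_simp
      ring
    rw [Finset.sum_congr rfl step]
    simp only [Finset.sum_add_distrib, ← Finset.mul_sum]
    have hH0 : H 0 = 0 := by simp [H]
    rw [ih, reflectH, hH0]
    have e1 : ∑ k ∈ Finset.range (n + 1), (1 : ℚ) / ((k : ℚ) + 1) = H (n + 1) := by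
      rw [H]
    rw [e1, H_succ (n + 1), Hgen_succ (n + 1)]
    have h3 : ((n : ℚ) + 2) ≠ 0 := by positivity
    push_cast
    field_simp
    ring

lemma Akey (n : ℕ) : ∑ k ∈ Finset.range (n + 1), (k : ℚ) ^ 3 * H k / ((n : ℚ) + 1 - k) =
    ((n : ℚ) + 1) ^ 3 * ((H (n + 1)) ^ 2 - Hgen 2 (n + 1))
      - (((n : ℚ) ^ 3 / 3 + (n : ℚ) ^ 2 / 2 + (n : ℚ) / 6)
          + ((n : ℚ) + 1) * ((n : ℚ) ^ 2 / 2 + (n : ℚ) / 2)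
          + ((n : ℚ) + 1) ^ 2 * ((n : ℚ) + 1)) * H (n + 1)
      + (((n : ℚ) ^ 3 / 9 + (n : ℚ) ^ 2 / 4 + 5 * (n : ℚ) / 36)
          + ((n : ℚ) + 1) * ((n : ℚ) ^ 2 / 4 + (n : ℚ) / 4)
          + ((n : ℚ) + 1) ^ 2 * ((n : ℚ) + 1)) := by
  have step : ∀ k ∈ Finset.range (n + 1),
      (k : ℚ) ^ 3 * H k / ((n : ℚ) + 1 - k) =
        ((n : ℚ) + 1) ^ 3 * (H k / ((n : ℚ) + 1 - k))
          - (k : ℚ) ^ 2 * H k - ((n : ℚ) + 1) * ((k : ℚ) * H k)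
          - ((n : ℚ) + 1) ^ 2 * H k := by
    intro k hk
    rw [Finset.mem_range] at hk
    have hk' : (k : ℚ) ≤ n := by exact_mod_cast Nat.lt_succ_iff.mp hk
    have h1 : ((n : ℚ) + 1 - k) ≠ 0 := by
      have : (0 : ℚ) < (n : ℚ) + 1 - k := by linarith
      linarith
    field_simp
    ring
  rw [Finset.sum_congr rfl step]
  simp only [Finset.sum_sub_distrib, ← Finset.mul_sum]
  rw [B0, C0, C1, C2]
  ring

lemma Skey (n : ℕ) : ∑ k ∈ Finset.range (n + 2), (k : ℚ) ^ 3 * H k * H (n + 1 - k) =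
    (∑ k ∈ Finset.range (n + 1), (k : ℚ) ^ 3 * H k * H (n - k))
      + ∑ k ∈ Finset.range (n + 1), (k : ℚ) ^ 3 * H k / ((n : ℚ) + 1 - k) := by
  rw [Finset.sum_range_succ]
  have hH0 : H (n + 1 - (n + 1)) = 0 := by simp [H]
  rw [hH0, mul_zero, add_zero, ← Finset.sum_add_distrib]
  refine Finset.sum_congr rfl fun k hk => ?_
  rw [Finset.mem_range] at hk
  have hk' : k ≤ n := Nat.lt_succ_iff.mp hk
  have h1 : n + 1 - k = (n - k) + 1 := by omega
  rw [h1, H_succ (n - k)]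
  have h2 : ((n - k : ℕ) : ℚ) = (n : ℚ) - k := by push_cast [Nat.cast_sub hk']; ring
  rw [h2]
  have hk'' : (k : ℚ) ≤ n := by exact_mod_cast hk'
  have h3 : ((n : ℚ) - k + 1) ≠ 0 := by
    have : (0 : ℚ) < (n : ℚ) - k + 1 := by linarith
    linarith
  have h4 : ((n : ℚ) + 1 - k) ≠ 0 := by
    have : (0 : ℚ) < (n : ℚ) + 1 - k := by linarith
    linarith
  field_simp
  ring

theorem stmt6 (n : ℕ) :
    ∑ k ∈ Finset.range (n + 1), (k : ℚ) ^ 3 * H k * H (n - k) =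
      ((n : ℚ) ^ 2 * ((n : ℚ) + 1) ^ 2 / 4) * ((H (n + 1)) ^ 2 - Hgen 2 (n + 1))
        - (1 / 12) * (n : ℚ) ^ 2 * ((n : ℚ) + 1) * (7 * (n : ℚ) + 5) * H (n + 1)
        + (1 / 72) * (n : ℚ) ^ 2 * ((n : ℚ) + 1) * (35 * (n : ℚ) + 37) := by
  induction n with
  | zero => norm_num [H, Hgen]
  | succ n ih =>
    have key := Skey n
    rw [key, ih, Akey n]
    rw [H_succ (n + 1), Hgen_succ (n + 1)]
    have h1 : ((n : ℚ) + 2) ≠ 0 := by positivity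
    push_cast
    field_simp
    ring
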